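/- Let N ≥ 2 and let K satisfy the kernel condition. There exists a constant C, depending only on N and C₀, such that for every finite positive Radon measure μ on ℝ^N and all points x, y ∈ ℝ^N with r := |x−y| > 0, one has |∫_{{w : |w−x| ≥ 2r}} (K(y−w) − K(x−w) − ∇K(x−w)·(y−x)) dμ(w)| ≤ C · |x−y| · M(μ)(x). -/

import Mathlib

open MeasureTheory Metric Filter
open scoped ENNReal Topology NNReal

/-- The kernel condition: `K` is twice continuously differentiable off the origin
and `|∇^j K(x)| ≤ C₀ |x|^{-(N-1+j)}` for `j = 0, 1, 2` and all `x ≠ 0`. -/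
def KernelCond (N : ℕ) (C₀ : ℝ) (K : EuclideanSpace ℝ (Fin N) → ℝ) : Prop :=
  ContDiffOn ℝ 2 K {(0 : EuclideanSpace ℝ (Fin N))}ᶜ ∧
    ∀ j : ℕ, j ≤ 2 → ∀ x : EuclideanSpace ℝ (Fin N), x ≠ 0 →
      ‖iteratedFDeriv ℝ j K x‖ ≤ C₀ * ‖x‖ ^ (-(N - 1 + j : ℝ))

/-- The Hardy–Littlewood maximal function of a (positive) measure:
`M(μ)(x) = sup_{r>0} μ(B(x,r)) / |B(x,r)|`. -/
noncomputable def maxFn {N : ℕ} (μ : Measure (EuclideanSpace ℝ (Fin N)))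
    (x : EuclideanSpace ℝ (Fin N)) : ℝ≥0∞ :=
  ⨆ (r : ℝ) (_ : 0 < r), μ (ball x r) / volume (ball x r)

namespace TaylorRemainderAux

variable {N : ℕ}

lemma measure_ball_le_maxFn (μ : Measure (EuclideanSpace ℝ (Fin N)))
    (x : EuclideanSpace ℝ (Fin N)) {R : ℝ} (hR : 0 < R) :
    μ (ball x R) ≤ volume (ball x R) * maxFn μ x := by
  have h1 : μ (ball x R) / volume (ball x R) ≤ maxFn μ x := by
    simp only [maxFn]
    exact le_iSup₂ (f := fun r (_ : 0 < r) => μ (ball x r) / volume (ball x r)) R hR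
  rw [ENNReal.div_le_iff (measure_ball_pos volume x hR).ne' measure_ball_lt_top.ne] at h1
  rw [mul_comm]
  exact h1

lemma dyadic_bound (μ : Measure (EuclideanSpace ℝ (Fin N)))
    (x : EuclideanSpace ℝ (Fin N)) {s : ℝ} (hs : 0 < s) :
    ∫⁻ w in {w : EuclideanSpace ℝ (Fin N) | s ≤ ‖w - x‖},
        ENNReal.ofReal (‖w - x‖ ^ (-(N + 1 : ℝ))) ∂μ ≤
      ENNReal.ofReal (2 ^ N / s) *
        (2 * volume (ball (0 : EuclideanSpace ℝ (Fin N)) 1)) * maxFn μ x := by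
  set A : ℕ → Set (EuclideanSpace ℝ (Fin N)) :=
    fun k => {w | 2 ^ k * s ≤ ‖w - x‖} ∩ ball x (2 ^ (k + 1) * s) with hA
  have hAm : ∀ k, MeasurableSet (A k) := by
    intro k
    exact ((isClosed_le continuous_const
      ((continuous_id.sub continuous_const).norm)).measurableSet).inter measurableSet_ball
  have hcover : {w : EuclideanSpace ℝ (Fin N) | s ≤ ‖w - x‖} ⊆ ⋃ k, A k := by
    intro w hw
    simp only [Set.mem_setOf_eq] at hw
    have h1 : 1 ≤ ‖w - x‖ / s := (one_le_div hs).mpr hw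
    have hex : ∃ n : ℕ, ‖w - x‖ / s < 2 ^ n := pow_unbounded_of_one_lt _ one_lt_two
    set k := Nat.find hex with hk
    have hspec : ‖w - x‖ / s < 2 ^ k := Nat.find_spec hex
    have hk0 : k ≠ 0 := by
      intro h
      rw [h] at hspec; simp at hspec; linarith
    obtain ⟨j, hj⟩ : ∃ j, k = j + 1 := ⟨k - 1, (Nat.succ_pred_eq_of_pos (Nat.pos_of_ne_zero hk0)).symm⟩
    have hmin : ¬ (‖w - x‖ / s < 2 ^ j) := Nat.find_min hex (by omega)
    push_neg at hmin
    refine Set.mem_iUnion.mpr ⟨j, ?_, ?_⟩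
    · exact (le_div_iff₀ hs).mp hmin
    · rw [mem_ball_iff_norm]
      rw [hj] at hspec
      exact (div_lt_iff₀ hs).mp hspec
  have hterm : ∀ k : ℕ,
      ∫⁻ w in A k, ENNReal.ofReal (‖w - x‖ ^ (-(N + 1 : ℝ))) ∂μ ≤
        ENNReal.ofReal (2 ^ N / s * (1 / 2) ^ k) *
          (volume (ball (0 : EuclideanSpace ℝ (Fin N)) 1) * maxFn μ x) := by
    intro k
    have hb : (0 : ℝ) < 2 ^ k * s := by positivity
    have hb' : (0 : ℝ) < 2 ^ (k + 1) * s := by positivity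
    have hpt : ∀ w ∈ A k,
        ENNReal.ofReal (‖w - x‖ ^ (-(N + 1 : ℝ))) ≤
          ENNReal.ofReal ((2 ^ k * s) ^ (-(N + 1 : ℝ))) := by
      intro w hw
      have hw1 : 2 ^ k * s ≤ ‖w - x‖ := hw.1
      apply ENNReal.ofReal_le_ofReal
      rw [Real.rpow_neg (by positivity), Real.rpow_neg hb.le]
      have h2 : (2 ^ k * s) ^ (N + 1 : ℝ) ≤ ‖w - x‖ ^ (N + 1 : ℝ) :=
        Real.rpow_le_rpow hb.le hw1 (by positivity)
      exact inv_anti₀ (Real.rpow_pos_of_pos hb _) h2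
    calc ∫⁻ w in A k, ENNReal.ofReal (‖w - x‖ ^ (-(N + 1 : ℝ))) ∂μ
        ≤ ∫⁻ _ in A k, ENNReal.ofReal ((2 ^ k * s) ^ (-(N + 1 : ℝ))) ∂μ :=
          setLIntegral_mono' (hAm k) hpt
      _ = ENNReal.ofReal ((2 ^ k * s) ^ (-(N + 1 : ℝ))) * μ (A k) := setLIntegral_const _ _
      _ ≤ ENNReal.ofReal ((2 ^ k * s) ^ (-(N + 1 : ℝ))) * μ (ball x (2 ^ (k + 1) * s)) :=
          mul_le_mul_right (measure_mono Set.inter_subset_right) _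
      _ ≤ ENNReal.ofReal ((2 ^ k * s) ^ (-(N + 1 : ℝ))) *
            (volume (ball x (2 ^ (k + 1) * s)) * maxFn μ x) :=
          mul_le_mul_right (measure_ball_le_maxFn μ x hb') _
      _ = ENNReal.ofReal (2 ^ N / s * (1 / 2) ^ k) *
            (volume (ball (0 : EuclideanSpace ℝ (Fin N)) 1) * maxFn μ x) := by
          have hre : (2 ^ k * s) ^ (-(N + 1 : ℝ)) * (2 ^ (k + 1) * s) ^ N =
              2 ^ N / s * (1 / 2) ^ k := by
            have hcast : (-(N + 1 : ℝ)) = -(((N + 1 : ℕ) : ℝ)) := by push_cast; ring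
            rw [hcast, Real.rpow_neg hb.le, Real.rpow_natCast, one_div, inv_pow]
            field_simp
            ring
          rw [Measure.addHaar_ball_of_pos volume x hb', finrank_euclideanSpace_fin]
          calc ENNReal.ofReal ((2 ^ k * s) ^ (-(N + 1 : ℝ))) *
                (ENNReal.ofReal ((2 ^ (k + 1) * s) ^ N) *
                  volume (ball (0 : EuclideanSpace ℝ (Fin N)) 1) * maxFn μ x)
              = ENNReal.ofReal ((2 ^ k * s) ^ (-(N + 1 : ℝ))) *
                  ENNReal.ofReal ((2 ^ (k + 1) * s) ^ N) *
                  (volume (ball (0 : EuclideanSpace ℝ (Fin N)) 1) * maxFn μ x) := by ring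
            _ = ENNReal.ofReal (2 ^ N / s * (1 / 2) ^ k) *
                  (volume (ball (0 : EuclideanSpace ℝ (Fin N)) 1) * maxFn μ x) := by
                rw [← ENNReal.ofReal_mul (Real.rpow_nonneg hb.le _), hre]
  calc ∫⁻ w in {w : EuclideanSpace ℝ (Fin N) | s ≤ ‖w - x‖},
        ENNReal.ofReal (‖w - x‖ ^ (-(N + 1 : ℝ))) ∂μ
      ≤ ∫⁻ w in ⋃ k, A k, ENNReal.ofReal (‖w - x‖ ^ (-(N + 1 : ℝ))) ∂μ :=
        lintegral_mono_set hcover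
    _ ≤ ∑' k, ∫⁻ w in A k, ENNReal.ofReal (‖w - x‖ ^ (-(N + 1 : ℝ))) ∂μ :=
        lintegral_iUnion_le _ _
    _ ≤ ∑' k, ENNReal.ofReal (2 ^ N / s * (1 / 2) ^ k) *
          (volume (ball (0 : EuclideanSpace ℝ (Fin N)) 1) * maxFn μ x) :=
        ENNReal.tsum_le_tsum hterm
    _ = ENNReal.ofReal (2 ^ N / s) *
          (2 * volume (ball (0 : EuclideanSpace ℝ (Fin N)) 1)) * maxFn μ x := by
        have hof : ∀ k : ℕ, ENNReal.ofReal (2 ^ N / s * (1 / 2) ^ k) =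
            ENNReal.ofReal (2 ^ N / s) * (ENNReal.ofReal (1 / 2)) ^ k := by
          intro k
          rw [ENNReal.ofReal_mul (by positivity), ENNReal.ofReal_pow (by norm_num)]
        have hhalf : ENNReal.ofReal (1 / 2) = 2⁻¹ := by
          rw [one_div, ENNReal.ofReal_inv_of_pos (by norm_num)]
          norm_num
        have hsum : ∑' k : ℕ, (ENNReal.ofReal (1 / 2)) ^ k = 2 := by
          rw [hhalf, ENNReal.tsum_geometric, ENNReal.one_sub_inv_two, inv_inv]
        calc ∑' k, ENNReal.ofReal (2 ^ N / s * (1 / 2) ^ k) *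
              (volume (ball (0 : EuclideanSpace ℝ (Fin N)) 1) * maxFn μ x)
            = (ENNReal.ofReal (2 ^ N / s) *
                (volume (ball (0 : EuclideanSpace ℝ (Fin N)) 1) * maxFn μ x)) *
                ∑' k : ℕ, (ENNReal.ofReal (1 / 2)) ^ k := by
              rw [← ENNReal.tsum_mul_left]
              congr 1
              funext k
              rw [hof k]
              ring
          _ = ENNReal.ofReal (2 ^ N / s) *
                (2 * volume (ball (0 : EuclideanSpace ℝ (Fin N)) 1)) * maxFn μ x := by
              rw [hsum]; ring

lemma taylor_pt (hN : 2 ≤ N) {C₀ : ℝ} (hC₀ : 0 ≤ C₀) {K : EuclideanSpace ℝ (Fin N) → ℝ}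
    (hK : KernelCond N C₀ K) (a v : EuclideanSpace ℝ (Fin N)) (hv : 0 < ‖v‖)
    (hav : 2 * ‖v‖ ≤ ‖a‖) :
    |K (a + v) - K a - fderiv ℝ K a v| ≤
      C₀ * 2 ^ (N + 1) * ‖a‖ ^ (-(N + 1 : ℝ)) * ‖v‖ ^ 2 := by
  have ha0 : 0 < ‖a‖ := lt_of_lt_of_le (by linarith) hav
  set S := closedBall a ‖v‖ with hSdef
  have hS0 : ∀ z ∈ S, ‖a‖ / 2 ≤ ‖z‖ := by
    intro z hz
    have h1 : ‖z - a‖ ≤ ‖v‖ := mem_closedBall_iff_norm.mp hz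
    have h2 : ‖a‖ - ‖z‖ ≤ ‖a - z‖ := norm_sub_norm_le a z
    rw [norm_sub_rev] at h2
    linarith
  have hSne : ∀ z ∈ S, z ≠ 0 := by
    intro z hz h0
    have := hS0 z hz
    rw [h0, norm_zero] at this
    linarith
  have hCD : ∀ z : EuclideanSpace ℝ (Fin N), z ≠ 0 → ContDiffAt ℝ 2 K z := by
    intro z hz
    exact hK.1.contDiffAt (isOpen_compl_singleton.mem_nhds (by simpa using hz))
  have hd1 : ∀ z : EuclideanSpace ℝ (Fin N), z ≠ 0 → HasFDerivAt K (fderiv ℝ K z) z :=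
    fun z hz => ((hCD z hz).differentiableAt (by norm_num)).hasFDerivAt
  have hd2 : ∀ z : EuclideanSpace ℝ (Fin N), z ≠ 0 →
      HasFDerivAt (fderiv ℝ K) (fderiv ℝ (fderiv ℝ K) z) z := by
    intro z hz
    have h2 : ContDiffAt ℝ 1 (fderiv ℝ K) z := (hCD z hz).fderiv_right (by norm_num)
    exact (h2.differentiableAt one_ne_zero).hasFDerivAt
  set L : ℝ := C₀ * 2 ^ (N + 1) * ‖a‖ ^ (-(N + 1 : ℝ)) with hL
  have hLnn : 0 ≤ L := by
    apply mul_nonneg (mul_nonneg hC₀ (by positivity))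
    exact Real.rpow_nonneg ha0.le _
  have hbound2 : ∀ z ∈ S, ‖fderiv ℝ (fderiv ℝ K) z‖ ≤ L := by
    intro z hz
    have hz0 := hSne z hz
    have e1 : ‖fderiv ℝ (fderiv ℝ K) z‖ = ‖iteratedFDeriv ℝ 2 K z‖ :=
      calc ‖fderiv ℝ (fderiv ℝ K) z‖
          = ‖iteratedFDeriv ℝ 0 (fderiv ℝ (fderiv ℝ K)) z‖ := by rw [norm_iteratedFDeriv_zero]
        _ = ‖iteratedFDeriv ℝ (0 + 1) (fderiv ℝ K) z‖ := norm_iteratedFDeriv_fderiv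
        _ = ‖iteratedFDeriv ℝ (1 + 1) K z‖ := norm_iteratedFDeriv_fderiv
        _ = ‖iteratedFDeriv ℝ 2 K z‖ := by norm_num
    have e2 : ‖iteratedFDeriv ℝ 2 K z‖ ≤ C₀ * ‖z‖ ^ (-(N + 1 : ℝ)) := by
      have := hK.2 2 le_rfl z hz0
      have hcast : (-((N : ℝ) - 1 + (2 : ℕ))) = -(N + 1 : ℝ) := by push_cast; ring
      rwa [hcast] at this
    have e3 : ‖z‖ ^ (-(N + 1 : ℝ)) ≤ (‖a‖ / 2) ^ (-(N + 1 : ℝ)) := by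
      have hz1 : ‖a‖ / 2 ≤ ‖z‖ := hS0 z hz
      have ha2 : (0 : ℝ) < ‖a‖ / 2 := by linarith
      rw [Real.rpow_neg (by linarith), Real.rpow_neg ha2.le]
      exact inv_anti₀ (Real.rpow_pos_of_pos ha2 _)
        (Real.rpow_le_rpow ha2.le hz1 (by positivity))
    have e4 : (‖a‖ / 2 : ℝ) ^ (-(N + 1 : ℝ)) = 2 ^ (N + 1) * ‖a‖ ^ (-(N + 1 : ℝ)) := by
      rw [Real.div_rpow ha0.le (by norm_num : (0:ℝ) ≤ 2)]
      rw [Real.rpow_neg ha0.le, Real.rpow_neg (by norm_num : (0:ℝ) ≤ 2)]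
      have h2e : (2 : ℝ) ^ ((N : ℝ) + 1) = 2 ^ (N + 1) := by
        rw [show ((N : ℝ) + 1) = ((N + 1 : ℕ) : ℝ) by push_cast; ring, Real.rpow_natCast]
      rw [div_eq_mul_inv, inv_inv, h2e]
      ring
    calc ‖fderiv ℝ (fderiv ℝ K) z‖ = ‖iteratedFDeriv ℝ 2 K z‖ := e1
      _ ≤ C₀ * ‖z‖ ^ (-(N + 1 : ℝ)) := e2
      _ ≤ C₀ * (‖a‖ / 2) ^ (-(N + 1 : ℝ)) := by
          exact mul_le_mul_of_nonneg_left e3 hC₀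
      _ = L := by rw [e4, hL]; ring
  have haS : a ∈ S := mem_closedBall_self (by linarith)
  have havS : a + v ∈ S := by
    rw [mem_closedBall_iff_norm, add_sub_cancel_left]
  have hfd : ∀ z ∈ S, ‖fderiv ℝ K z - fderiv ℝ K a‖ ≤ L * ‖v‖ := by
    intro z hz
    have h := (convex_closedBall a ‖v‖).norm_image_sub_le_of_norm_hasFDerivWithin_le
      (f := fderiv ℝ K) (f' := fun w => fderiv ℝ (fderiv ℝ K) w)
      (fun w hw => (hd2 w (hSne w hw)).hasFDerivWithinAt) hbound2 haS hz
    have hza : ‖z - a‖ ≤ ‖v‖ := mem_closedBall_iff_norm.mp hz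
    calc ‖fderiv ℝ K z - fderiv ℝ K a‖ ≤ L * ‖z - a‖ := h
      _ ≤ L * ‖v‖ := mul_le_mul_of_nonneg_left hza hLnn
  have key := (convex_closedBall a ‖v‖).norm_image_sub_le_of_norm_hasFDerivWithin_le
    (f := fun z => K z - (fderiv ℝ K a z - fderiv ℝ K a a))
    (f' := fun z => fderiv ℝ K z - fderiv ℝ K a)
    (fun z hz => ((hd1 z (hSne z hz)).sub
      ((fderiv ℝ K a).hasFDerivAt.sub_const (fderiv ℝ K a a))).hasFDerivWithinAt)
    hfd haS havS
  have hsimp : (K (a + v) - (fderiv ℝ K a (a + v) - fderiv ℝ K a a)) -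
      (K a - (fderiv ℝ K a a - fderiv ℝ K a a)) = K (a + v) - K a - fderiv ℝ K a v := by
    rw [map_add]
    ring
  rw [hsimp, add_sub_cancel_left] at key
  rw [← Real.norm_eq_abs]
  calc ‖K (a + v) - K a - fderiv ℝ K a v‖ ≤ L * ‖v‖ * ‖v‖ := key
    _ = C₀ * 2 ^ (N + 1) * ‖a‖ ^ (-(N + 1 : ℝ)) * ‖v‖ ^ 2 := by rw [hL]; ring

lemma grad_sum (K : EuclideanSpace ℝ (Fin N) → ℝ) (a v : EuclideanSpace ℝ (Fin N)) :
    (∑ i, gradient K a i * v i) = fderiv ℝ K a v := by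
  have h1 : (∑ i, gradient K a i * v i) = (inner (𝕜 := ℝ) (gradient K a) v : ℝ) := by
    rw [PiLp.inner_apply]
    simp [RCLike.inner_apply, mul_comm]
  rw [h1]
  exact InnerProductSpace.toDual_symm_apply

end TaylorRemainderAux

lemma ofReal_norm_eq_coe_nnnorm {E : Type*} [SeminormedAddCommGroup E] (z : E) :
    ENNReal.ofReal ‖z‖ = (‖z‖₊ : ℝ≥0∞) := by
  rw [← coe_nnnorm, ENNReal.ofReal_coe_nnreal]

/-- Second-order Taylor remainder estimate: for a kernel `K` satisfying the kernel
condition there is `C = C(N, C₀)` such that for every finite positive Radon measure `μ`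
and all `x ≠ y` (with `r = |x−y|`),
`|∫_{|w−x|≥2r} (K(y−w) − K(x−w) − ∇K(x−w)·(y−x)) dμ(w)| ≤ C |x−y| M(μ)(x)`. -/
theorem taylor_remainder_term_estimate
    (N : ℕ) (hN : 2 ≤ N) (C₀ : ℝ)
    (K : EuclideanSpace ℝ (Fin N) → ℝ) (hK : KernelCond N C₀ K) :
    ∃ C : ℝ, 0 < C ∧ ∀ μ : Measure (EuclideanSpace ℝ (Fin N)), IsFiniteMeasure μ →
      ∀ x y : EuclideanSpace ℝ (Fin N), x ≠ y →
        ENNReal.ofReal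
            |∫ w in {w : EuclideanSpace ℝ (Fin N) | 2 * ‖x - y‖ ≤ ‖w - x‖},
              (K (y - w) - K (x - w) - ∑ i, gradient K (x - w) i * (y - x) i) ∂μ| ≤
          ENNReal.ofReal (C * ‖x - y‖) * maxFn μ x := by
  classical
  open TaylorRemainderAux in
  have hC₀ : 0 ≤ C₀ := by
    have hpos : 0 < N := by omega
    set x₀ : EuclideanSpace ℝ (Fin N) := EuclideanSpace.single ⟨0, hpos⟩ (1 : ℝ) with hx₀def
    have hx₀ : ‖x₀‖ = 1 := by
      rw [hx₀def, EuclideanSpace.norm_single, norm_one]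
    have hne : x₀ ≠ 0 := by
      intro h
      rw [h, norm_zero] at hx₀
      norm_num at hx₀
    have h := hK.2 0 (by norm_num) x₀ hne
    rw [hx₀, Real.one_rpow, mul_one] at h
    exact le_trans (norm_nonneg _) h
  set B : ℝ := (volume (ball (0 : EuclideanSpace ℝ (Fin N)) 1)).toReal with hBdef
  have hBpos : 0 < B := ENNReal.toReal_pos
    (measure_ball_pos volume 0 one_pos).ne' measure_ball_lt_top.ne
  set C₁ : ℝ := C₀ * 2 ^ (N + 1) with hC₁
  have hC₁nn : 0 ≤ C₁ := by positivity
  refine ⟨C₁ * 2 ^ N * (2 * B) + 1, by positivity, ?_⟩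
  intro μ hμ x y hxy
  set r : ℝ := ‖x - y‖ with hrdef
  have hr : 0 < r := by
    rw [hrdef]
    exact norm_sub_pos_iff.mpr hxy
  set S : Set (EuclideanSpace ℝ (Fin N)) := {w | 2 * ‖x - y‖ ≤ ‖w - x‖} with hSdef
  have hSm : MeasurableSet S :=
    (isClosed_le continuous_const ((continuous_id.sub continuous_const).norm)).measurableSet
  set f : EuclideanSpace ℝ (Fin N) → ℝ :=
    fun w => K (y - w) - K (x - w) - ∑ i, gradient K (x - w) i * (y - x) i with hfdef
  have hpt : ∀ w ∈ S, (‖f w‖₊ : ℝ≥0∞) ≤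
      ENNReal.ofReal (C₁ * r ^ 2) * ENNReal.ofReal (‖w - x‖ ^ (-(N + 1 : ℝ))) := by
    intro w hw
    have hw' : 2 * ‖x - y‖ ≤ ‖w - x‖ := hw
    have hvpos : 0 < ‖y - x‖ := by rw [norm_sub_rev]; exact hr
    have hav : 2 * ‖y - x‖ ≤ ‖x - w‖ := by
      rw [norm_sub_rev y x, norm_sub_rev x w]
      exact hw'
    have hsum : x - w + (y - x) = y - w := by abel
    have hfw : f w = K ((x - w) + (y - x)) - K (x - w) - fderiv ℝ K (x - w) (y - x) := by
      rw [hfdef]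
      simp only
      rw [TaylorRemainderAux.grad_sum, hsum]
    have hb := TaylorRemainderAux.taylor_pt hN hC₀ hK (x - w) (y - x) hvpos hav
    rw [← hfw] at hb
    have hnorm1 : ‖x - w‖ = ‖w - x‖ := norm_sub_rev _ _
    have hnorm2 : ‖y - x‖ = r := by rw [hrdef, norm_sub_rev]
    rw [hnorm1, hnorm2] at hb
    rw [← ofReal_norm_eq_coe_nnnorm, Real.norm_eq_abs]
    calc ENNReal.ofReal |f w|
        ≤ ENNReal.ofReal (C₀ * 2 ^ (N + 1) * ‖w - x‖ ^ (-(N + 1 : ℝ)) * r ^ 2) :=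
          ENNReal.ofReal_le_ofReal hb
      _ = ENNReal.ofReal (C₁ * r ^ 2) * ENNReal.ofReal (‖w - x‖ ^ (-(N + 1 : ℝ))) := by
          rw [← ENNReal.ofReal_mul (by positivity)]
          congr 1
          rw [hC₁]
          ring
  have hmain : ENNReal.ofReal |∫ w in S, f w ∂μ| ≤
      ENNReal.ofReal ((C₁ * 2 ^ N * (2 * B) + 1) * r) * maxFn μ x := by
    calc ENNReal.ofReal |∫ w in S, f w ∂μ|
        = (‖∫ w in S, f w ∂μ‖₊ : ℝ≥0∞) := by
          rw [← Real.norm_eq_abs, ofReal_norm_eq_coe_nnnorm]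
      _ ≤ ∫⁻ w in S, (‖f w‖₊ : ℝ≥0∞) ∂μ := enorm_integral_le_lintegral_enorm _
      _ ≤ ∫⁻ w in S, ENNReal.ofReal (C₁ * r ^ 2) *
            ENNReal.ofReal (‖w - x‖ ^ (-(N + 1 : ℝ))) ∂μ := setLIntegral_mono' hSm hpt
      _ = ENNReal.ofReal (C₁ * r ^ 2) *
            ∫⁻ w in S, ENNReal.ofReal (‖w - x‖ ^ (-(N + 1 : ℝ))) ∂μ :=
          lintegral_const_mul' _ _ ENNReal.ofReal_ne_top
      _ ≤ ENNReal.ofReal (C₁ * r ^ 2) *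
            (ENNReal.ofReal (2 ^ N / (2 * ‖x - y‖)) *
              (2 * volume (ball (0 : EuclideanSpace ℝ (Fin N)) 1)) * maxFn μ x) :=
          mul_le_mul_right (TaylorRemainderAux.dyadic_bound μ x (by positivity)) _
      _ ≤ ENNReal.ofReal ((C₁ * 2 ^ N * (2 * B) + 1) * r) * maxFn μ x := by
          have hvol : (2 : ℝ≥0∞) * volume (ball (0 : EuclideanSpace ℝ (Fin N)) 1) =
              ENNReal.ofReal (2 * B) := by
            rw [ENNReal.ofReal_mul (by norm_num), ENNReal.ofReal_ofNat, hBdef,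
              ENNReal.ofReal_toReal measure_ball_lt_top.ne]
          rw [hvol, ← hrdef]
          calc ENNReal.ofReal (C₁ * r ^ 2) *
                (ENNReal.ofReal (2 ^ N / (2 * r)) * ENNReal.ofReal (2 * B) * maxFn μ x)
              = ENNReal.ofReal (C₁ * r ^ 2) * ENNReal.ofReal (2 ^ N / (2 * r)) *
                  ENNReal.ofReal (2 * B) * maxFn μ x := by ring
            _ = ENNReal.ofReal (C₁ * r ^ 2 * (2 ^ N / (2 * r)) * (2 * B)) * maxFn μ x := by
                rw [← ENNReal.ofReal_mul (by positivity), ← ENNReal.ofReal_mul (by positivity)]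
            _ ≤ ENNReal.ofReal ((C₁ * 2 ^ N * (2 * B) + 1) * r) * maxFn μ x := by
                apply mul_le_mul_left
                apply ENNReal.ofReal_le_ofReal
                have heq : C₁ * r ^ 2 * (2 ^ N / (2 * r)) * (2 * B) = C₁ * 2 ^ N * B * r := by
                  field_simp
                rw [heq]
                have h2N : (0:ℝ) < 2 ^ N := by positivity
                nlinarith [mul_nonneg (mul_nonneg (mul_nonneg hC₁nn h2N.le) hBpos.le) hr.le]
  exact hmain
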